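/- Let a > 0 and t > 0. For every non-negative measurable function f on (0,∞), ∫_0^t a e^{−a(t−s)} f(s) ds ≤ (1 + e^{−1}) Mf(t), where M is the one-dimensional Hardy–Littlewood maximal operator on (0,∞). -/

import Mathlib

open MeasureTheory Filter ENNReal

noncomputable section

/-- The one-dimensional Hardy–Littlewood maximal operator on `(0,∞)`:
`M f t = sup_{0 < a < t < b < ∞} (1/(b-a)) ∫_a^b |f(s)| ds`. -/
def hlMax1 (f : ℝ → ℝ) (t : ℝ) : ℝ≥0∞ :=
  ⨆ (a : ℝ) (b : ℝ) (_ : 0 < a ∧ a < t ∧ t < b),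
    (ENNReal.ofReal (b - a))⁻¹ * ∫⁻ s in Set.Ioo a b, ENNReal.ofReal |f s|

lemma hlMax1_step1 (f : ℝ → ℝ) (t α b : ℝ) (hα : 0 < α) (hαt : α < t) (htb : t < b) :
    ∫⁻ s in Set.Ioo α b, ENNReal.ofReal |f s| ≤ ENNReal.ofReal (b - α) * hlMax1 f t := by
  have hle : (ENNReal.ofReal (b - α))⁻¹ * ∫⁻ s in Set.Ioo α b, ENNReal.ofReal |f s|
      ≤ hlMax1 f t :=
    le_iSup_of_le α (le_iSup_of_le b (le_iSup_of_le ⟨hα, hαt, htb⟩ le_rfl))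
  have h0 : ENNReal.ofReal (b - α) ≠ 0 := by
    simp only [ne_eq, ENNReal.ofReal_eq_zero, not_le]
    linarith
  exact (ENNReal.inv_mul_le_iff h0 ENNReal.ofReal_ne_top).mp hle

lemma hlMax1_step2 (f : ℝ → ℝ) (t α : ℝ) (hN : hlMax1 f t ≠ ⊤) (hα : 0 < α) (hαt : α < t) :
    ∫⁻ s in Set.Ioo α t, ENNReal.ofReal |f s| ≤ ENNReal.ofReal (t - α) * hlMax1 f t := by
  set N := hlMax1 f t with hNdef
  refine ENNReal.le_of_forall_pos_le_add fun ε hε _ => ?_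
  have hNr : (0:ℝ) ≤ N.toReal := ENNReal.toReal_nonneg
  set δ : ℝ := (ε : ℝ) / (N.toReal + 1) with hδ
  have hε' : (0:ℝ) < (ε : ℝ) := by exact_mod_cast hε
  have hδ0 : 0 < δ := div_pos hε' (by linarith)
  have hfinal : ENNReal.ofReal δ * N ≤ (ε : ℝ≥0∞) := by
    conv_lhs => rw [← ENNReal.ofReal_toReal hN]
    rw [← ENNReal.ofReal_mul hδ0.le, ← ENNReal.ofReal_coe_nnreal]
    apply ENNReal.ofReal_le_ofReal
    rw [hδ, div_mul_eq_mul_div, div_le_iff₀ (by linarith)]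
    nlinarith
  calc ∫⁻ s in Set.Ioo α t, ENNReal.ofReal |f s|
      ≤ ∫⁻ s in Set.Ioo α (t + δ), ENNReal.ofReal |f s| :=
        lintegral_mono_set (Set.Ioo_subset_Ioo le_rfl (by linarith))
    _ ≤ ENNReal.ofReal (t + δ - α) * N :=
        hlMax1_step1 f t α (t + δ) hα hαt (by linarith)
    _ = ENNReal.ofReal (t - α) * N + ENNReal.ofReal δ * N := by
        rw [show t + δ - α = (t - α) + δ by ring,
          ENNReal.ofReal_add (by linarith) hδ0.le, add_mul]
    _ ≤ ENNReal.ofReal (t - α) * N + ε := add_le_add le_rfl hfinal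

lemma hlMax1_step3 (f : ℝ → ℝ) (hf : Measurable f) (t c : ℝ) (hN : hlMax1 f t ≠ ⊤)
    (hc : 0 ≤ c) (hct : c < t) :
    ∫⁻ s in Set.Ioo c t, ENNReal.ofReal |f s| ≤ ENNReal.ofReal (t - c) * hlMax1 f t := by
  set g : ℝ → ℝ≥0∞ := fun s => ENNReal.ofReal |f s| with hg
  have hgm : Measurable g := ENNReal.measurable_ofReal.comp hf.abs
  have hd : 0 < t - c := by linarith
  set α : ℕ → ℝ := fun n => c + (t - c) / (n + 2) with hα
  have hn2 : ∀ n : ℕ, (0:ℝ) < (n:ℝ) + 2 := fun n => by positivity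
  have hα0 : ∀ n, 0 < α n := fun n =>
    add_pos_of_nonneg_of_pos hc (div_pos hd (hn2 n))
  have hαc : ∀ n, c < α n := fun n => by
    have := div_pos hd (hn2 n); simp only [hα]; linarith
  have hαt : ∀ n, α n < t := by
    intro n
    have h1 : (t - c) / ((n:ℝ) + 2) < t - c := by
      apply div_lt_self hd
      have : (0:ℝ) ≤ (n:ℝ) := Nat.cast_nonneg n
      linarith
    simp only [hα]; linarith
  have hαmono : ∀ n m : ℕ, n ≤ m → α m ≤ α n := by
    intro n m hnm
    simp only [hα]
    have : (t - c) / ((m:ℝ) + 2) ≤ (t - c) / ((n:ℝ) + 2) := by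
      apply div_le_div_of_nonneg_left hd.le (hn2 n)
      exact_mod_cast by omega
    linarith
  set F : ℕ → ℝ → ℝ≥0∞ := fun n => (Set.Ioo (α n) t).indicator g with hF
  have hFm : ∀ n, Measurable (F n) := fun n => hgm.indicator measurableSet_Ioo
  have hFmono : Monotone F := by
    intro n m hnm
    exact Set.indicator_le_indicator_of_subset
      (Set.Ioo_subset_Ioo (hαmono n m hnm) le_rfl) (fun s => zero_le)
  have hkey : (Set.Ioo c t).indicator g = fun s => ⨆ n, F n s := by
    funext s
    by_cases hs : s ∈ Set.Ioo c t
    · rw [Set.indicator_of_mem hs]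
      apply le_antisymm
      · obtain ⟨hsc, hst⟩ := hs
        have hsc' : 0 < s - c := by linarith
        obtain ⟨n, hn⟩ := exists_nat_gt ((t - c) / (s - c))
        have hmem : s ∈ Set.Ioo (α n) t := by
          constructor
          · have h1 : t - c < (s - c) * n := by
              rw [div_lt_iff₀ hsc'] at hn; linarith
            have h2 : (t - c) / ((n:ℝ) + 2) < s - c := by
              rw [div_lt_iff₀ (hn2 n)]
              have hn0 : (0:ℝ) ≤ (n:ℝ) := Nat.cast_nonneg n
              nlinarith
            simp only [hα]; linarith
          · exact hst
        refine le_iSup_of_le n ?_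
        rw [hF]; simp only
        rw [Set.indicator_of_mem hmem]
      · exact iSup_le fun n => Set.indicator_le_self _ _ s
    · rw [Set.indicator_of_notMem hs]
      simp only [hF]
      refine le_antisymm zero_le (iSup_le fun n => ?_)
      rw [Set.indicator_of_notMem]
      intro hmem
      exact hs ⟨lt_trans (hαc n) hmem.1, hmem.2⟩
  calc ∫⁻ s in Set.Ioo c t, ENNReal.ofReal |f s|
      = ∫⁻ s, (Set.Ioo c t).indicator g s := (lintegral_indicator measurableSet_Ioo g).symm
    _ = ⨆ n, ∫⁻ s, F n s := by rw [hkey]; exact lintegral_iSup hFm hFmono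
    _ = ⨆ n, ∫⁻ s in Set.Ioo (α n) t, g s := by
        refine iSup_congr fun n => ?_
        rw [hF]; exact lintegral_indicator measurableSet_Ioo g
    _ ≤ ENNReal.ofReal (t - c) * hlMax1 f t := by
        refine iSup_le fun n => ?_
        refine (hlMax1_step2 f t (α n) hN (hα0 n) (hαt n)).trans ?_
        exact mul_le_mul_left (ENNReal.ofReal_le_ofReal (by linarith [hαc n])) _
/-- For `a, t > 0` and a non-negative measurable function `f` on `(0,∞)`,
`∫_0^t a e^{-a(t-s)} f(s) ds ≤ (1 + e⁻¹) M f(t)`. -/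
theorem convolution_exp_le_maximal (a t : ℝ) (ha : 0 < a) (ht : 0 < t)
    (f : ℝ → ℝ) (hf : Measurable f) (hf0 : ∀ s ∈ Set.Ioi (0 : ℝ), 0 ≤ f s) :
    ∫⁻ s in Set.Ioo 0 t, ENNReal.ofReal (a * Real.exp (-a * (t - s)) * f s)
      ≤ ENNReal.ofReal (1 + Real.exp (-1)) * hlMax1 f t := by
  set N := hlMax1 f t with hNdef
  by_cases hNtop : N = ⊤
  · rw [hNtop, ENNReal.mul_top (by
      simp only [ne_eq, ENNReal.ofReal_eq_zero, not_le]
      positivity)]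
    exact le_top
  set g : ℝ → ℝ≥0∞ := fun s => ENNReal.ofReal |f s| with hg
  have hgm : Measurable g := ENNReal.measurable_ofReal.comp hf.abs
  set x : ℝ := Real.exp (-(1/2 : ℝ)) with hx
  have hx0 : 0 < x := Real.exp_pos _
  have hx1 : x < 1 := Real.exp_lt_one_iff.mpr (by norm_num)
  have hx1' : 0 < 1 - x := by linarith
  set h : ℝ := 1 / (2 * a) with hh
  have hh0 : 0 < h := by positivity
  have hah : a * h = 1 / 2 := by rw [hh]; field_simp
  set d : ℕ → ℝ := fun m => a * (1 - x) * x ^ m with hd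
  have hd0 : ∀ m, 0 ≤ d m := fun m => by positivity
  set φ : ℕ → ℝ → ℝ≥0∞ :=
    fun m s => ENNReal.ofReal (d m) * (Set.Ioo (t - ((m : ℝ) + 1) * h) t).indicator g s with hφ
  have hφm : ∀ m, Measurable (φ m) := fun m =>
    (hgm.indicator measurableSet_Ioo).const_mul _
  -- pointwise key bound
  have key : ∀ s ∈ Set.Ioo (0:ℝ) t,
      ENNReal.ofReal (a * Real.exp (-a * (t - s)) * f s) ≤ ∑' m, φ m s := by
    intro s hs
    obtain ⟨hs0, hst⟩ := hs
    set n : ℕ := ⌊(t - s) / h⌋₊ with hn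
    have hts : 0 < t - s := by linarith
    have hnh : (n : ℝ) * h ≤ t - s := by
      rw [← le_div_iff₀ hh0]
      exact Nat.floor_le (by positivity)
    have hmem : ∀ m : ℕ, s ∈ Set.Ioo (t - ((m : ℝ) + 1) * h) t ↔ n ≤ m := by
      intro m
      rw [Set.mem_Ioo]
      constructor
      · rintro ⟨h1, -⟩
        have hlt : (t - s) / h < (m : ℝ) + 1 := by
          rw [div_lt_iff₀ hh0]; linarith
        have h5 : n < m + 1 := by
          rw [hn]
          refine (Nat.floor_lt (by positivity)).mpr ?_
          push_cast
          linarith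
        omega
      · intro hnm
        refine ⟨?_, hst⟩
        have h2 : (t - s) / h < (n : ℝ) + 1 := Nat.lt_floor_add_one _
        have h3 : t - s < ((n : ℝ) + 1) * h := by
          rw [div_lt_iff₀ hh0] at h2; linarith
        have h4 : ((n:ℝ) + 1) * h ≤ ((m:ℝ) + 1) * h := by
          have : (n:ℝ) ≤ (m:ℝ) := by exact_mod_cast hnm
          nlinarith
        linarith
    -- sum over m ≥ n
    have hshift : ∑' k : ℕ, φ (n + k) s ≤ ∑' m, φ m s :=
      tsum_comp_le_tsum_of_injective (add_right_injective n) (fun m => φ m s)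
    have hφval : ∀ k : ℕ, φ (n + k) s = ENNReal.ofReal (d (n + k)) * g s := by
      intro k
      rw [hφ]
      simp only
      rw [Set.indicator_of_mem ((hmem (n + k)).mpr (Nat.le_add_right n k))]
    have hsum : ∑' k : ℕ, φ (n + k) s = ENNReal.ofReal (a * x ^ n) * g s := by
      simp_rw [hφval]
      rw [ENNReal.tsum_mul_right]
      congr 1
      have hsummable : Summable (fun k : ℕ => a * (1 - x) * x ^ n * x ^ k) :=
        (summable_geometric_of_lt_one hx0.le hx1).mul_left _
      have : ∀ k : ℕ, d (n + k) = a * (1 - x) * x ^ n * x ^ k := by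
        intro k; rw [hd]; simp only; rw [pow_add]; ring
      rw [← ENNReal.ofReal_tsum_of_nonneg (fun k => hd0 (n + k)) (by
        simpa only [this] using hsummable)]
      congr 1
      simp_rw [this]
      rw [tsum_mul_left, tsum_geometric_of_lt_one hx0.le hx1]
      field_simp
    have hfsge : 0 ≤ f s := hf0 s hs0
    have habs : |f s| = f s := abs_of_nonneg hfsge
    have hexp : Real.exp (-a * (t - s)) ≤ x ^ n := by
      rw [hx, ← Real.exp_nat_mul]
      apply Real.exp_le_exp.mpr
      have : (n : ℝ) * (1/2) ≤ a * (t - s) := by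
        calc (n : ℝ) * (1/2) = (n : ℝ) * (a * h) := by rw [hah]
          _ = a * ((n:ℝ) * h) := by ring
          _ ≤ a * (t - s) := by nlinarith
      linarith
    calc ENNReal.ofReal (a * Real.exp (-a * (t - s)) * f s)
        = ENNReal.ofReal (a * Real.exp (-a * (t - s))) * ENNReal.ofReal (f s) := by
          rw [← ENNReal.ofReal_mul (by positivity)]
      _ ≤ ENNReal.ofReal (a * x ^ n) * g s := by
          refine mul_le_mul' (ENNReal.ofReal_le_ofReal ?_) ?_
          · nlinarith [Real.exp_pos (-a * (t - s))]
          · rw [hg]; simp only [habs]; exact le_rfl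
      _ = ∑' k : ℕ, φ (n + k) s := hsum.symm
      _ ≤ ∑' m, φ m s := hshift
  -- term bound
  have hterm : ∀ m : ℕ, ∫⁻ s in Set.Ioo 0 t, φ m s
      ≤ ENNReal.ofReal (d m * (((m:ℝ) + 1) * h)) * N := by
    intro m
    set c : ℝ := max (t - ((m:ℝ) + 1) * h) 0 with hc
    have hc0 : 0 ≤ c := le_max_right _ _
    have hct : c < t := by
      rw [hc, max_lt_iff]
      constructor
      · nlinarith
      · exact ht
    have htc : t - c ≤ ((m:ℝ) + 1) * h := by
      have : t - ((m:ℝ)+1)*h ≤ c := le_max_left _ _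
      linarith
    calc ∫⁻ s in Set.Ioo 0 t, φ m s
        = ENNReal.ofReal (d m) *
            ∫⁻ s in Set.Ioo 0 t, (Set.Ioo (t - ((m : ℝ) + 1) * h) t).indicator g s := by
          rw [hφ]
          exact lintegral_const_mul _ (hgm.indicator measurableSet_Ioo)
      _ = ENNReal.ofReal (d m) * ∫⁻ s in Set.Ioo c t, g s := by
          rw [setLIntegral_indicator measurableSet_Ioo, Set.Ioo_inter_Ioo, min_self, hc]
      _ ≤ ENNReal.ofReal (d m) * (ENNReal.ofReal (t - c) * N) :=
          mul_le_mul_right (hlMax1_step3 f hf t c hNtop hc0 hct) _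
      _ ≤ ENNReal.ofReal (d m * (((m:ℝ) + 1) * h)) * N := by
          rw [ENNReal.ofReal_mul (hd0 m), mul_assoc]
          exact mul_le_mul_right (mul_le_mul_left (ENNReal.ofReal_le_ofReal htc) _) _
  -- sum of coefficients
  have hxsq : x * x = Real.exp (-1) := by
    rw [hx, ← Real.exp_add]; norm_num
  have hS : ∑' m : ℕ, d m * (((m:ℝ) + 1) * h) = (1/2) * (1 - x)⁻¹ := by
    have s1 : Summable (fun m : ℕ => (m : ℝ) * x ^ m) :=
      (hasSum_coe_mul_geometric_of_norm_lt_one (by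
        rw [Real.norm_eq_abs, abs_of_pos hx0]; exact hx1)).summable
    have s2 : Summable (fun m : ℕ => x ^ m) := summable_geometric_of_lt_one hx0.le hx1
    have heq : ∀ m : ℕ, d m * (((m:ℝ) + 1) * h) =
        a * (1 - x) * h * ((m : ℝ) * x ^ m) + a * (1 - x) * h * x ^ m := by
      intro m; rw [hd]; simp only; ring
    rw [tsum_congr heq, Summable.tsum_add (s1.mul_left _) (s2.mul_left _),
      tsum_mul_left, tsum_mul_left,
      tsum_coe_mul_geometric_of_norm_lt_one (by
        rw [Real.norm_eq_abs, abs_of_pos hx0]; exact hx1),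
      tsum_geometric_of_lt_one hx0.le hx1]
    have hane : a ≠ 0 := ha.ne'
    have hxne : 1 - x ≠ 0 := hx1'.ne'
    rw [hh]
    field_simp
    ring
  have hSle : (1/2 : ℝ) * (1 - x)⁻¹ ≤ 1 + Real.exp (-1) := by
    rw [← hxsq]
    have he1 : Real.exp (-1) = (Real.exp 1)⁻¹ := by
      rw [← Real.exp_neg]
    have hlb : (0.36 : ℝ) ≤ x * x := by
      rw [hxsq, he1]
      rw [le_inv_comm₀ (by norm_num) (Real.exp_pos 1)]
      calc Real.exp 1 ≤ 2.7182818286 := Real.exp_one_lt_d9.le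
        _ ≤ (0.36 : ℝ)⁻¹ := by norm_num
    have hub : x ≤ 0.609 := by
      nlinarith [hxsq, he1, Real.exp_one_gt_d9,
        inv_strictAnti₀ (by norm_num : (0:ℝ) < 2.7182818283) Real.exp_one_gt_d9]
    rw [inv_eq_one_div, mul_comm, div_mul_eq_mul_div, one_mul,
      div_le_iff₀ hx1']
    nlinarith
  calc ∫⁻ s in Set.Ioo 0 t, ENNReal.ofReal (a * Real.exp (-a * (t - s)) * f s)
      ≤ ∫⁻ s in Set.Ioo 0 t, ∑' m, φ m s :=
        setLIntegral_mono (by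
          exact Measurable.ennreal_tsum hφm) key
    _ = ∑' m, ∫⁻ s in Set.Ioo 0 t, φ m s :=
        lintegral_tsum (fun m => (hφm m).aemeasurable)
    _ ≤ ∑' m, ENNReal.ofReal (d m * (((m:ℝ) + 1) * h)) * N :=
        ENNReal.tsum_le_tsum hterm
    _ = ENNReal.ofReal (∑' m, d m * (((m:ℝ) + 1) * h)) * N := by
        have hsummable2 : Summable (fun m : ℕ => d m * (((m:ℝ) + 1) * h)) := by
          have heq2 : ∀ m : ℕ, d m * (((m:ℝ) + 1) * h) =
              a * (1 - x) * h * ((m : ℝ) * x ^ m) + a * (1 - x) * h * x ^ m := by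
            intro m; rw [hd]; simp only; ring
          rw [funext heq2]
          exact (((hasSum_coe_mul_geometric_of_norm_lt_one (𝕜 := ℝ) (r := x) (by
            rw [Real.norm_eq_abs, abs_of_pos hx0]; exact hx1)).summable).mul_left (a * (1 - x) * h)).add
            ((summable_geometric_of_lt_one hx0.le hx1).mul_left (a * (1 - x) * h))
        rw [ENNReal.tsum_mul_right]
        congr 1
        exact (ENNReal.ofReal_tsum_of_nonneg
          (fun m => mul_nonneg (hd0 m) (by positivity)) hsummable2).symm
    _ ≤ ENNReal.ofReal (1 + Real.exp (-1)) * N := by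
        rw [hS]
        exact mul_le_mul_left (ENNReal.ofReal_le_ofReal hSle) _

end
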